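/- Let n ≥ 1 be an integer, 0 < α < n and 1 < p < q < ∞. If there exists a constant C such that ‖I_α f‖_{L^q(ℝ^{n+1})} ≤ C ‖f‖_{L^p(ℝ^{n+1})} for every nonnegative measurable f ∈ L^p(ℝ^{n+1}), then α/n = 1/p − 1/q. -/

import Mathlib

open MeasureTheory ENNReal NNReal

noncomputable section

/-- `ℝ^{n+1}` as `ℝ^n × ℝ`. -/
abbrev Pt (n : ℕ) := EuclideanSpace ℝ (Fin n) × ℝ

/-- The open light cone `Λ = {(y,s) : |s| > |y|}`. -/
def lightCone (n : ℕ) : Set (Pt n) := {p | ‖p.1‖ < |p.2|}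

/-- The integrand `f(x−y, t−s) (|s|+|y|)^{α−n} (|s|−|y|)^{α/n−1}`. -/
def ker (n : ℕ) (α : ℝ) (f : Pt n → ℝ) (z p : Pt n) : ℝ≥0∞ :=
  ENNReal.ofReal (f (z.1 - p.1, z.2 - p.2)) *
    ENNReal.ofReal ((|p.2| + ‖p.1‖) ^ (α - n) * (|p.2| - ‖p.1‖) ^ (α / n - 1))

/-- The light-cone fractional integral `I_α f`. -/
def Iop (n : ℕ) (α : ℝ) (f : Pt n → ℝ) (z : Pt n) : ℝ≥0∞ :=
  ∫⁻ p in lightCone n, ker n α f z p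

/-- The shifted cone shell `Λ_{ℓj}(x,t)`. -/
def shellAt (n : ℕ) (ℓ j : ℤ) (c : Pt n) : Set (Pt n) :=
  {p | (2:ℝ) ^ j ≤ |p.2 - c.2| + ‖p.1 - c.1‖ ∧ |p.2 - c.2| + ‖p.1 - c.1‖ < (2:ℝ) ^ (j + 1) ∧
       (2:ℝ) ^ (j - ℓ) ≤ |p.2 - c.2| - ‖p.1 - c.1‖ ∧
       |p.2 - c.2| - ‖p.1 - c.1‖ < (2:ℝ) ^ (j - ℓ + 1)}

/-- The dyadic enlargement `Λ*_{ℓj}(x,t)`. -/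
def shellStarAt (n : ℕ) (ℓ j : ℤ) (c : Pt n) : Set (Pt n) :=
  {p | (2:ℝ) ^ (j - 3) ≤ |p.2 - c.2| + ‖p.1 - c.1‖ ∧
       |p.2 - c.2| + ‖p.1 - c.1‖ < (2:ℝ) ^ (j + 3) ∧
       (2:ℝ) ^ (j - ℓ - 3) ≤ |p.2 - c.2| - ‖p.1 - c.1‖ ∧
       |p.2 - c.2| - ‖p.1 - c.1‖ < (2:ℝ) ^ (j - ℓ + 3)}

/-- The cone shell `Λ_{ℓj}` (centered at the origin). -/
def shell (n : ℕ) (ℓ j : ℤ) : Set (Pt n) := shellAt n ℓ j 0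

/-- The discrete dyadic cone `Λ_ℓ = ⋃_j Λ_{ℓj}`. -/
def Lam (n : ℕ) (ℓ : ℤ) : Set (Pt n) := ⋃ j : ℤ, shell n ℓ j

/-- The partial operator `Δ_{ℓj} I_α f`. -/
def Dlj (n : ℕ) (α : ℝ) (ℓ j : ℤ) (f : Pt n → ℝ) (z : Pt n) : ℝ≥0∞ :=
  ∫⁻ p in shell n ℓ j, ker n α f z p

/-- The partial operator `Δ_ℓ I_α f`. -/
def Dl (n : ℕ) (α : ℝ) (ℓ : ℤ) (f : Pt n → ℝ) (z : Pt n) : ℝ≥0∞ :=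
  ∫⁻ p in Lam n ℓ, ker n α f z p

/-- `θ_ℓ(x,t) = ‖f‖_p^{−p} ∬_{Λ_ℓ} f(x−y,t−s)^p dy ds`. -/
def theta (n : ℕ) (p : ℝ) (f : Pt n → ℝ) (ℓ : ℤ) (z : Pt n) : ℝ≥0∞ :=
  (∫⁻ w in Lam n ℓ, ENNReal.ofReal (f (z.1 - w.1, z.2 - w.2)) ^ p) /
    eLpNorm f (ENNReal.ofReal p) volume ^ p

/-- The cone of directions `Γ^ν_η` with central direction `e`. -/
def coneDir (n η : ℕ) (e : EuclideanSpace ℝ (Fin n)) : Set (EuclideanSpace ℝ (Fin n)) :=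
  {y | y ≠ 0 ∧ ‖(‖y‖⁻¹ • y) - e‖ ≤ 4 * (2:ℝ) ^ (-(η:ℝ))}

/-- The directional maximal operator `M^ν_η`. -/
def Mnu (n η : ℕ) (e : EuclideanSpace ℝ (Fin n)) (f : Pt n → ℝ) (z : Pt n) : ℝ≥0∞ :=
  ⨆ (ℓ : ℕ) (_ : ℓ ≤ η) (j : ℤ),
    (ENNReal.ofReal ((2:ℝ) ^ j * (2:ℝ) ^ (j - (ℓ:ℤ)) * (2:ℝ) ^ ((j - (η:ℤ)) * ((n:ℤ) - 1))))⁻¹ *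
      ∫⁻ p in {p : Pt n | p ∈ shell n ℓ j ∧ p.1 ∈ coneDir n η e},
        ENNReal.ofReal (f (z.1 - p.1, z.2 - p.2))

/-- The averaged maximal operator `M_η`. -/
def Meta (n η : ℕ) {ι : Type} [Fintype ι] (y : ι → EuclideanSpace ℝ (Fin n)) (f : Pt n → ℝ)
    (z : Pt n) : ℝ≥0∞ :=
  (ENNReal.ofReal ((2:ℝ) ^ ((η:ℤ) * ((n:ℤ) - 1))))⁻¹ * ∑ ν, Mnu n η (y ν) f z

/-- `Ω^α(x,t) = (|t|+|x|)^{α−n} (|t|−|x|)^{α/n−1}`. -/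
def Om (n : ℕ) (α : ℝ) (p : Pt n) : ℝ≥0∞ :=
  ENNReal.ofReal ((|p.2| + ‖p.1‖) ^ (α - n) * (|p.2| - ‖p.1‖) ^ (α / n - 1))


-- auxiliary
instance haarPt (n : ℕ) : (volume : Measure (Pt n)).IsAddHaarMeasure :=
  inferInstanceAs (((volume : Measure (EuclideanSpace ℝ (Fin n))).prod
    (volume : Measure ℝ)).IsAddHaarMeasure)

lemma lint_comp_smul (n : ℕ) {r : ℝ} (hr : 0 < r) (g : Pt n → ℝ≥0∞) :
    ∫⁻ x : Pt n, g (r • x) = ENNReal.ofReal ((r ^ (n + 1) : ℝ))⁻¹ * ∫⁻ x, g x := by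
  have hfr : Module.finrank ℝ (Pt n) = n + 1 := by
    simp [Module.finrank_prod]
  have h1 : ∫⁻ x : Pt n, g (r • x) =
      ∫⁻ x, g x ∂(Measure.map (r • ·) volume) :=
    ((Homeomorph.smulOfNeZero r hr.ne' : Pt n ≃ₜ Pt n).toMeasurableEquiv
      |> MeasureTheory.lintegral_map_equiv g).symm
  rw [h1, Measure.map_addHaar_smul volume hr.ne', lintegral_smul_measure, hfr]
  congr 1
  rw [abs_of_nonneg (by positivity)]

lemma isOpen_lightCone (n : ℕ) : IsOpen (lightCone n) := by
  have : lightCone n = {p : Pt n | 0 < |p.2| - ‖p.1‖} := by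
    ext p; simp [lightCone, sub_pos]
  rw [this]
  exact isOpen_lt continuous_const (by fun_prop)

def Vs (n : ℕ) : Set (Pt n) := {w | 1 < |w.2| - ‖w.1‖ ∧ |w.2| + ‖w.1‖ < 2}
def Ps (n : ℕ) : Set (Pt n) := {p | ‖p.1‖ < 1/8 ∧ 3/2 < p.2 ∧ p.2 < 13/8}
def Ws (n : ℕ) : Set (Pt n) := {z | ‖z.1‖ < 1/16 ∧ |z.2| < 1/16}
def f0 (n : ℕ) : Pt n → ℝ := (Vs n).indicator (fun _ => 1)

lemma isOpen_Vs (n : ℕ) : IsOpen (Vs n) := by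
  have h1 : IsOpen {w : Pt n | 1 < |w.2| - ‖w.1‖} := isOpen_lt continuous_const (by fun_prop)
  have h2 : IsOpen {w : Pt n | |w.2| + ‖w.1‖ < 2} := isOpen_lt (by fun_prop) continuous_const
  exact h1.inter h2

lemma isOpen_Ps (n : ℕ) : IsOpen (Ps n) := by
  have h1 : IsOpen {w : Pt n | ‖w.1‖ < 1/8} := isOpen_lt (by fun_prop) continuous_const
  have h2 : IsOpen {w : Pt n | 3/2 < w.2} := isOpen_lt continuous_const (by fun_prop)
  have h3 : IsOpen {w : Pt n | w.2 < 13/8} := isOpen_lt (by fun_prop) continuous_const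
  exact h1.inter (h2.inter h3)

lemma isOpen_Ws (n : ℕ) : IsOpen (Ws n) := by
  have h1 : IsOpen {w : Pt n | ‖w.1‖ < 1/16} := isOpen_lt (by fun_prop) continuous_const
  have h2 : IsOpen {w : Pt n | |w.2| < 1/16} := isOpen_lt (by fun_prop) continuous_const
  exact h1.inter h2

lemma vol_Vs_lt_top (n : ℕ) : volume (Vs n) < ⊤ := by
  refine lt_of_le_of_lt (measure_mono (fun w hw => ?_)) (measure_ball_lt_top (x := (0 : Pt n)) (r := 2))
  obtain ⟨h1, h2⟩ := hw
  have hn1 : ‖w.1‖ < 2 := by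
    have := abs_nonneg w.2; linarith [norm_nonneg w.1]
  have hn2 : |w.2| < 2 := by linarith [norm_nonneg w.1]
  simp only [Metric.mem_ball, dist_zero_right, Prod.norm_def, sup_lt_iff]
  exact ⟨hn1, by simpa [Real.norm_eq_abs] using hn2⟩

lemma vol_Ps_lt_top (n : ℕ) : volume (Ps n) < ⊤ := by
  refine lt_of_le_of_lt (measure_mono (fun w hw => ?_)) (measure_ball_lt_top (x := (0 : Pt n)) (r := 2))
  obtain ⟨h1, h2, h3⟩ := hw
  simp only [Metric.mem_ball, dist_zero_right, Prod.norm_def, sup_lt_iff]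
  constructor
  · linarith
  · rw [Real.norm_eq_abs, abs_lt]; constructor <;> linarith

lemma vol_Ps_pos (n : ℕ) : 0 < volume (Ps n) := by
  refine (isOpen_Ps n).measure_pos volume ⟨((0 : EuclideanSpace ℝ (Fin n)), (25/16 : ℝ)), ?_⟩
  refine ⟨?_, by norm_num, by norm_num⟩
  simp

lemma vol_Ws_pos (n : ℕ) : 0 < volume (Ws n) := by
  refine (isOpen_Ws n).measure_pos volume ⟨((0 : EuclideanSpace ℝ (Fin n)), (0 : ℝ)), ?_⟩
  constructor <;> simp

lemma f0_meas (n : ℕ) : Measurable (f0 n) :=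
  measurable_const.indicator (isOpen_Vs n).measurableSet

lemma f0_nonneg (n : ℕ) : ∀ z, 0 ≤ f0 n z := fun z =>
  Set.indicator_nonneg (fun _ _ => zero_le_one) z

lemma f0_mem (n : ℕ) {p : ℝ} : MemLp (f0 n) (ENNReal.ofReal p) volume :=
  memLp_indicator_const _ (isOpen_Vs n).measurableSet 1 (Or.inr (vol_Vs_lt_top n).ne)

lemma ker_lower (n : ℕ) {α : ℝ} (hα0 : 0 < α) (hαn : α < n) {z w : Pt n}
    (hz : z ∈ Ws n) (hw : w ∈ Ps n) :
    ENNReal.ofReal ((2:ℝ) ^ (α - (n:ℝ)) * 2 ^ (α / (n:ℝ) - 1)) ≤ ker n α (f0 n) z w := by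
  obtain ⟨hz1, hz2⟩ := hz
  obtain ⟨hw1, hw2, hw3⟩ := hw
  have hn0 : (0:ℝ) < n := lt_trans hα0 hαn
  have habs : |w.2| = w.2 := abs_of_pos (by linarith)
  -- bounds on |z.2 - w.2| and ‖z.1 - w.1‖
  have hb1 : |z.2 - w.2| ≤ |z.2| + |w.2| := abs_sub z.2 w.2
  have hb2 : |w.2| - |z.2| ≤ |z.2 - w.2| := by
    have := abs_sub_abs_le_abs_sub w.2 z.2
    rwa [abs_sub_comm] at this
  have hb3 : ‖z.1 - w.1‖ ≤ ‖z.1‖ + ‖w.1‖ := norm_sub_le _ _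
  -- membership in Vs
  have hV : (z.1 - w.1, z.2 - w.2) ∈ Vs n := by
    constructor
    · simp only; linarith
    · simp only; linarith
  have hf : f0 n (z.1 - w.1, z.2 - w.2) = 1 := Set.indicator_of_mem hV _
  unfold ker
  rw [hf]
  simp only [ENNReal.ofReal_one, one_mul]
  apply ENNReal.ofReal_le_ofReal
  have ha_pos : (0:ℝ) < |w.2| + ‖w.1‖ := by linarith [norm_nonneg w.1]
  have ha_le : |w.2| + ‖w.1‖ ≤ 2 := by linarith [norm_nonneg w.1]
  have hbb_pos : (0:ℝ) < |w.2| - ‖w.1‖ := by linarith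
  have hbb_le : |w.2| - ‖w.1‖ ≤ 2 := by linarith [norm_nonneg w.1]
  have h1 : (2:ℝ) ^ (α - (n:ℝ)) ≤ (|w.2| + ‖w.1‖) ^ (α - (n:ℝ)) :=
    Real.rpow_le_rpow_of_nonpos ha_pos ha_le (by linarith)
  have h2 : (2:ℝ) ^ (α / (n:ℝ) - 1) ≤ (|w.2| - ‖w.1‖) ^ (α / (n:ℝ) - 1) := by
    refine Real.rpow_le_rpow_of_nonpos hbb_pos hbb_le ?_
    have : α / (n:ℝ) < 1 := (div_lt_one hn0).2 hαn
    linarith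
  exact mul_le_mul h1 h2 (Real.rpow_nonneg (by norm_num) _) (Real.rpow_nonneg ha_pos.le _)

lemma Iop_lower (n : ℕ) {α : ℝ} (hα0 : 0 < α) (hαn : α < n) {z : Pt n} (hz : z ∈ Ws n) :
    ENNReal.ofReal ((2:ℝ) ^ (α - (n:ℝ)) * 2 ^ (α / (n:ℝ) - 1)) * volume (Ps n)
      ≤ Iop n α (f0 n) z := by
  have hPsub : Ps n ⊆ lightCone n := by
    intro w hw
    obtain ⟨h1, h2, h3⟩ := hw
    have : |w.2| = w.2 := abs_of_pos (by linarith)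
    simp only [lightCone, Set.mem_setOf_eq, this]
    linarith
  calc ENNReal.ofReal ((2:ℝ) ^ (α - (n:ℝ)) * 2 ^ (α / (n:ℝ) - 1)) * volume (Ps n)
      = ∫⁻ _ in Ps n, ENNReal.ofReal ((2:ℝ) ^ (α - (n:ℝ)) * 2 ^ (α / (n:ℝ) - 1)) :=
        (setLIntegral_const _ _).symm
    _ ≤ ∫⁻ w in Ps n, ker n α (f0 n) z w :=
        setLIntegral_mono' (isOpen_Ps n).measurableSet
          (fun w hw => ker_lower n hα0 hαn hz hw)
    _ ≤ Iop n α (f0 n) z := lintegral_mono_set hPsub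

lemma Aq_pos (n : ℕ) {α q : ℝ} (hα0 : 0 < α) (hαn : α < n) (hq : 0 < q) :
    0 < ∫⁻ z, Iop n α (f0 n) z ^ q := by
  set c : ℝ≥0∞ := ENNReal.ofReal ((2:ℝ) ^ (α - (n:ℝ)) * 2 ^ (α / (n:ℝ) - 1)) * volume (Ps n)
    with hc
  have hcpos : 0 < c := by
    apply ENNReal.mul_pos
    · simp only [ne_eq, ENNReal.ofReal_eq_zero, not_le]
      positivity
    · exact (vol_Ps_pos n).ne'
  have hcfin : c ≠ ⊤ := ENNReal.mul_ne_top ENNReal.ofReal_ne_top (vol_Ps_lt_top n).ne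
  have key : c ^ q * volume (Ws n) ≤ ∫⁻ z, Iop n α (f0 n) z ^ q := by
    calc c ^ q * volume (Ws n) = ∫⁻ _ in Ws n, c ^ q := (setLIntegral_const _ _).symm
      _ ≤ ∫⁻ z in Ws n, Iop n α (f0 n) z ^ q :=
          setLIntegral_mono' (isOpen_Ws n).measurableSet
            (fun z hz => ENNReal.rpow_le_rpow (Iop_lower n hα0 hαn hz) hq.le)
      _ ≤ ∫⁻ z, Iop n α (f0 n) z ^ q := setLIntegral_le_lintegral _ _
  refine lt_of_lt_of_le ?_ key
  exact ENNReal.mul_pos (ENNReal.rpow_pos hcpos hcfin).ne' (vol_Ws_pos n).ne'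

lemma rpow_inv_pow (n : ℕ) {l : ℝ} (hl : 0 < l) :
    ((l ^ (n + 1) : ℝ))⁻¹ = l ^ (-((n:ℝ) + 1)) := by
  rw [← Real.rpow_natCast l (n + 1), ← Real.rpow_neg hl.le]
  push_cast
  ring_nf

lemma smul_mem_lightCone_iff (n : ℕ) {l : ℝ} (hl : 0 < l) (p : Pt n) :
    l • p ∈ lightCone n ↔ p ∈ lightCone n := by
  simp only [lightCone, Set.mem_setOf_eq, Prod.smul_fst, Prod.smul_snd, norm_smul,
    smul_eq_mul, abs_mul, Real.norm_eq_abs, abs_of_pos hl]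
  exact mul_lt_mul_iff_right₀ hl

lemma Iop_scale (n : ℕ) {α : ℝ} (f : Pt n → ℝ) {l : ℝ} (hl : 0 < l) (z : Pt n) :
    Iop n α (fun w => f (l • w)) z
      = ENNReal.ofReal (l ^ (-(α - (n:ℝ) + α / (n:ℝ) - 1) - ((n:ℝ) + 1))) *
          Iop n α f (l • z) := by
  set e' : ℝ := α - (n:ℝ) + α / (n:ℝ) - 1 with he'
  have key : ∀ p : Pt n, (lightCone n).indicator (ker n α f (l • z)) (l • p)
      = ENNReal.ofReal (l ^ e') * (lightCone n).indicator
          (ker n α (fun w => f (l • w)) z) p := by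
    intro p
    by_cases hp : p ∈ lightCone n
    · have hp' : l • p ∈ lightCone n := (smul_mem_lightCone_iff n hl p).2 hp
      rw [Set.indicator_of_mem hp', Set.indicator_of_mem hp]
      have hpc : ‖p.1‖ < |p.2| := hp
      unfold ker
      have h1 : ((l • z : Pt n).1 - (l • p : Pt n).1, (l • z : Pt n).2 - (l • p : Pt n).2)
          = (l • (z.1 - p.1), l * (z.2 - p.2)) := by
        simp [Prod.smul_fst, Prod.smul_snd, smul_sub, mul_sub, smul_eq_mul]
      have h2 : f ((l • z : Pt n).1 - (l • p : Pt n).1, (l • z : Pt n).2 - (l • p : Pt n).2)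
          = (fun w => f (l • w)) (z.1 - p.1, z.2 - p.2) := by
        rw [h1]; rfl
      rw [h2]
      have ha : |(l • p : Pt n).2| + ‖(l • p : Pt n).1‖ = l * (|p.2| + ‖p.1‖) := by
        simp only [Prod.smul_fst, Prod.smul_snd, norm_smul, smul_eq_mul, abs_mul,
          Real.norm_eq_abs, abs_of_pos hl]
        ring
      have hb : |(l • p : Pt n).2| - ‖(l • p : Pt n).1‖ = l * (|p.2| - ‖p.1‖) := by
        simp only [Prod.smul_fst, Prod.smul_snd, norm_smul, smul_eq_mul, abs_mul,
          Real.norm_eq_abs, abs_of_pos hl]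
        ring
      rw [ha, hb]
      have hapos : (0:ℝ) ≤ |p.2| + ‖p.1‖ := by positivity
      have hbpos : (0:ℝ) ≤ |p.2| - ‖p.1‖ := by
        have := norm_nonneg p.1; linarith
      rw [Real.mul_rpow hl.le hapos, Real.mul_rpow hl.le hbpos]
      have hOm : l ^ (α - (n:ℝ)) * (|p.2| + ‖p.1‖) ^ (α - (n:ℝ)) *
          (l ^ (α / (n:ℝ) - 1) * (|p.2| - ‖p.1‖) ^ (α / (n:ℝ) - 1))
          = l ^ e' * ((|p.2| + ‖p.1‖) ^ (α - (n:ℝ)) * (|p.2| - ‖p.1‖) ^ (α / (n:ℝ) - 1)) := by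
        rw [he', show α - (n:ℝ) + α / (n:ℝ) - 1 = (α - (n:ℝ)) + (α / (n:ℝ) - 1) by ring,
          Real.rpow_add hl]
        ring
      rw [hOm, ENNReal.ofReal_mul (Real.rpow_nonneg hl.le _)]
      ring
    · have hp' : l • p ∉ lightCone n := fun h => hp ((smul_mem_lightCone_iff n hl p).1 h)
      rw [Set.indicator_of_notMem hp', Set.indicator_of_notMem hp, mul_zero]
  have hI1 : Iop n α (fun w => f (l • w)) z
      = ∫⁻ p, (lightCone n).indicator (ker n α (fun w => f (l • w)) z) p :=
    (lintegral_indicator (isOpen_lightCone n).measurableSet _).symm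
  have hI2 : Iop n α f (l • z)
      = ∫⁻ p, (lightCone n).indicator (ker n α f (l • z)) p :=
    (lintegral_indicator (isOpen_lightCone n).measurableSet _).symm
  have hmain : ENNReal.ofReal (l ^ e') * Iop n α (fun w => f (l • w)) z
      = ENNReal.ofReal (l ^ (-((n:ℝ) + 1))) * Iop n α f (l • z) := by
    rw [hI1, hI2, ← lintegral_const_mul' _ _ ENNReal.ofReal_ne_top]
    have hs := lint_comp_smul n hl ((lightCone n).indicator (ker n α f (l • z)))
    rw [rpow_inv_pow n hl] at hs
    rw [← hs]
    exact lintegral_congr fun p => (key p).symm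
  have hee : ENNReal.ofReal (l ^ (-e')) * (ENNReal.ofReal (l ^ e') *
      Iop n α (fun w => f (l • w)) z) = Iop n α (fun w => f (l • w)) z := by
    rw [← mul_assoc, ← ENNReal.ofReal_mul (Real.rpow_nonneg hl.le _),
      ← Real.rpow_add hl, neg_add_cancel, Real.rpow_zero, ENNReal.ofReal_one, one_mul]
  calc Iop n α (fun w => f (l • w)) z
      = ENNReal.ofReal (l ^ (-e')) * (ENNReal.ofReal (l ^ e') *
          Iop n α (fun w => f (l • w)) z) := hee.symm
    _ = ENNReal.ofReal (l ^ (-e')) * (ENNReal.ofReal (l ^ (-((n:ℝ) + 1))) *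
          Iop n α f (l • z)) := by rw [hmain]
    _ = ENNReal.ofReal (l ^ (-e' - ((n:ℝ) + 1))) * Iop n α f (l • z) := by
        rw [← mul_assoc, ← ENNReal.ofReal_mul (Real.rpow_nonneg hl.le _),
          ← Real.rpow_add hl, ← sub_eq_add_neg]

lemma eLp_scale (n : ℕ) {p : ℝ} (hp : 0 < p) (f : Pt n → ℝ) {l : ℝ} (hl : 0 < l) :
    eLpNorm (fun w => f (l • w)) (ENNReal.ofReal p) volume
      = ENNReal.ofReal (l ^ (-((n:ℝ) + 1) * (1 / p))) *
          eLpNorm f (ENNReal.ofReal p) volume := by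
  have hp0 : ENNReal.ofReal p ≠ 0 := by
    simp [ENNReal.ofReal_eq_zero, not_le, hp]
  have hptop : ENNReal.ofReal p ≠ ⊤ := ENNReal.ofReal_ne_top
  rw [eLpNorm_eq_lintegral_rpow_enorm_toReal hp0 hptop, eLpNorm_eq_lintegral_rpow_enorm_toReal hp0 hptop,
    ENNReal.toReal_ofReal hp.le]
  have hs := lint_comp_smul n hl (fun w => ‖f w‖ₑ ^ p)
  rw [rpow_inv_pow n hl] at hs
  rw [show (∫⁻ x : Pt n, ‖(fun w => f (l • w)) x‖ₑ ^ p)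
      = ∫⁻ x : Pt n, ‖f (l • x)‖ₑ ^ p from rfl,
    hs, ENNReal.mul_rpow_of_nonneg _ _ (by positivity : (0:ℝ) ≤ 1 / p),
    ENNReal.ofReal_rpow_of_pos (Real.rpow_pos_of_pos hl _), ← Real.rpow_mul hl.le]

theorem stmt1 (n : ℕ) (hn : 1 ≤ n) (α : ℝ) (hα0 : 0 < α) (hαn : α < n)
    (p q : ℝ) (hp : 1 < p) (hpq : p < q)
    (H : ∃ C : ℝ≥0, ∀ f : Pt n → ℝ, Measurable f → (∀ z, 0 ≤ f z) →
      MemLp f (ENNReal.ofReal p) volume →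
      (∫⁻ z, Iop n α f z ^ q) ^ (1 / q) ≤ C * eLpNorm f (ENNReal.ofReal p) volume) :
    α / n = 1 / p - 1 / q := by
  obtain ⟨C, hC⟩ := H
  have hnR : (0:ℝ) < n := lt_trans hα0 hαn
  have hq : (0:ℝ) < q := lt_trans (lt_trans zero_lt_one hp) hpq
  have hp0 : (0:ℝ) < p := lt_trans zero_lt_one hp
  set f := f0 n with hf
  set B := eLpNorm f (ENNReal.ofReal p) volume with hB
  have hBfin : B ≠ ⊤ := (f0_mem n).2.ne
  set Aq := ∫⁻ z, Iop n α f z ^ q with hAq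
  have hAqpos : 0 < Aq := Aq_pos n hα0 hαn hq
  set A := Aq ^ (1 / q) with hA
  have hApos : 0 < A := ENNReal.rpow_pos_of_nonneg hAqpos (by positivity)
  have hAle : A ≤ C * B := hC f (f0_meas n) (f0_nonneg n) (f0_mem n)
  have hAfin : A ≠ ⊤ :=
    ne_top_of_le_ne_top (ENNReal.mul_ne_top ENNReal.coe_ne_top hBfin) hAle
  set E : ℝ := -(α - (n:ℝ) + α / (n:ℝ) - 1) - ((n:ℝ) + 1) + -((n:ℝ) + 1) * (1 / q) +
    ((n:ℝ) + 1) * (1 / p) with hE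
  -- key scaling inequality
  have main : ∀ l : ℝ, 0 < l → ENNReal.ofReal (l ^ E) * A ≤ C * B := by
    intro l hl
    set fl : Pt n → ℝ := fun w => f (l • w) with hfl
    have hflm : Measurable fl := (f0_meas n).comp (measurable_const_smul l)
    have hflnn : ∀ z, 0 ≤ fl z := fun z => f0_nonneg n _
    have hflmem : MemLp fl (ENNReal.ofReal p) volume := by
      constructor
      · exact hflm.aestronglyMeasurable
      · rw [eLp_scale n hp0 f hl]
        exact ENNReal.mul_lt_top ENNReal.ofReal_lt_top (f0_mem n).2
    have hineq := hC fl hflm hflnn hflmem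
    set E1 : ℝ := -(α - (n:ℝ) + α / (n:ℝ) - 1) - ((n:ℝ) + 1) with hE1
    have omul : ∀ a b : ℝ, ENNReal.ofReal (l ^ a) * ENNReal.ofReal (l ^ b)
        = ENNReal.ofReal (l ^ (a + b)) := by
      intro a b
      rw [← ENNReal.ofReal_mul (Real.rpow_nonneg hl.le _), ← Real.rpow_add hl]
    have opow : ∀ a b : ℝ, (ENNReal.ofReal (l ^ a)) ^ b = ENNReal.ofReal (l ^ (a * b)) := by
      intro a b
      rw [ENNReal.ofReal_rpow_of_pos (Real.rpow_pos_of_pos hl _), ← Real.rpow_mul hl.le]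
    -- LHS computation
    have hLHS : (∫⁻ z, Iop n α fl z ^ q) ^ (1 / q)
        = ENNReal.ofReal (l ^ (E1 + -((n:ℝ) + 1) * (1 / q))) * A := by
      have h1 : ∀ z, Iop n α fl z ^ q
          = ENNReal.ofReal (l ^ (E1 * q)) * (fun w => Iop n α f w ^ q) (l • z) := by
        intro z
        rw [hfl, Iop_scale n f hl z, ENNReal.mul_rpow_of_nonneg _ _ hq.le, opow]
      simp_rw [h1]
      rw [lintegral_const_mul' _ _ ENNReal.ofReal_ne_top,
        lint_comp_smul n hl (fun w => Iop n α f w ^ q), rpow_inv_pow n hl, ← hAq,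
        ← mul_assoc, omul,
        ENNReal.mul_rpow_of_nonneg _ _ (by positivity : (0:ℝ) ≤ 1 / q), opow, ← hA]
      congr 2
      field_simp
    rw [hLHS, eLp_scale n hp0 f hl, ← hB] at hineq
    -- multiply both sides by ofReal (l ^ ((n+1)*(1/p)))
    have hmul := mul_le_mul_right hineq (ENNReal.ofReal (l ^ (((n:ℝ) + 1) * (1 / p))))
    rw [← mul_assoc, omul] at hmul
    have hz : ((n:ℝ) + 1) * (1 / p) + -((n:ℝ) + 1) * (1 / p) = 0 := by ring
    rw [mul_left_comm, ← mul_assoc (ENNReal.ofReal (l ^ (((n:ℝ) + 1) * (1 / p)))), omul,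
      hz, Real.rpow_zero, ENNReal.ofReal_one, one_mul] at hmul
    calc ENNReal.ofReal (l ^ E) * A
        = ENNReal.ofReal (l ^ (((n:ℝ) + 1) * (1 / p) + (E1 + -((n:ℝ) + 1) * (1 / q)))) * A := by
          congr 2
          rw [hE, hE1]; ring_nf
      _ ≤ C * B := hmul
  -- conclude E = 0
  have hE0 : E = 0 := by
    by_contra hne
    have hlast : ∀ t : ℝ, 0 < t → ENNReal.ofReal t * A ≤ C * B := by
      intro t ht
      have hlp : (0:ℝ) < t ^ (1 / E) := Real.rpow_pos_of_pos ht _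
      have := main (t ^ (1 / E)) hlp
      rwa [← Real.rpow_mul ht.le, one_div_mul_cancel hne, Real.rpow_one] at this
    set K := C * B with hK
    have hKfin : K ≠ ⊤ := ENNReal.mul_ne_top ENNReal.coe_ne_top hBfin
    have hAR : A = ENNReal.ofReal A.toReal := (ENNReal.ofReal_toReal hAfin).symm
    have hARpos : 0 < A.toReal := ENNReal.toReal_pos hApos.ne' hAfin
    set t : ℝ := (K.toReal + 1) / A.toReal with htdef
    have ht : 0 < t := by positivity
    have := hlast t ht
    rw [hAR, ← ENNReal.ofReal_mul ht.le, div_mul_cancel₀ _ hARpos.ne'] at this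
    have hcontr : K < ENNReal.ofReal (K.toReal + 1) := by
      conv_lhs => rw [← ENNReal.ofReal_toReal hKfin]
      exact ENNReal.ofReal_lt_ofReal_iff (by positivity) |>.2 (by linarith)
    exact absurd this (not_le.2 hcontr)
  -- algebra
  rw [hE] at hE0
  have hn1 : (n:ℝ) + 1 ≠ 0 := by positivity
  have key : ((n:ℝ) + 1) * (α / n) = ((n:ℝ) + 1) * (1 / p - 1 / q) := by
    field_simp at hE0 ⊢
    ring_nf at hE0 ⊢
    nlinarith [hE0]
  exact mul_left_cancel₀ hn1 key

end
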